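/- For 0 ≤ k < l < α, t ∈ I_M with M ≥ l+1, and x ∈ I_{l+1}(e_k + e_l), the dyadic Fejér kernel satisfies K_{2^α}(x + t) = 0. -/

import Mathlib

open MeasureTheory Finset

/-- The Walsh group `G = (ℤ/2)^ℕ`. -/
abbrev G : Type := ℕ → ZMod 2

instance : TopologicalSpace (ZMod 2) := ⊥
instance : DiscreteTopology (ZMod 2) := ⟨rfl⟩
noncomputable instance : MeasurableSpace G := borel G
instance : BorelSpace G := ⟨rfl⟩

/-- The normalized Haar measure on `G`. -/
noncomputable def μ : Measure G :=
  Measure.addHaarMeasure (⊤ : TopologicalSpace.PositiveCompacts G)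

/-- Rademacher functions. -/
noncomputable def rad (k : ℕ) (x : G) : ℝ := (-1 : ℝ) ^ (x k).val

/-- Walsh–Paley functions. -/
noncomputable def walsh (n : ℕ) (x : G) : ℝ :=
  ∏ k ∈ Finset.range n, rad k x ^ (n.testBit k).toNat

/-- Walsh–Dirichlet kernels `D_n = ∑_{k<n} w_k`. -/
noncomputable def dirichlet (n : ℕ) (x : G) : ℝ := ∑ k ∈ Finset.range n, walsh k x

/-- Walsh–Fejér kernels `K_n = (1/n) ∑_{k=1}^n D_k`. -/
noncomputable def fejer (n : ℕ) (x : G) : ℝ :=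
  (1 / (n : ℝ)) * ∑ k ∈ Finset.range n, dirichlet (k + 1) x

/-- The cylinder `I_n(x) = {y : y_j = x_j for j < n}`. -/
def cyl (n : ℕ) (x : G) : Set G := {y | ∀ j < n, y j = x j}

/-- `I_n = I_n(0)`. -/
def I (n : ℕ) : Set G := cyl n 0

/-- `e_k` has a `1` in coordinate `k` and `0` elsewhere. -/
def e (k : ℕ) : G := fun j => if j = k then 1 else 0

/-- Walsh–Fourier coefficients. -/
noncomputable def fcoef (f : G → ℝ) (n : ℕ) : ℝ := ∫ x, f x * walsh n x ∂μ

/-- Walsh partial sums. -/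
noncomputable def partialSum (f : G → ℝ) (n : ℕ) (x : G) : ℝ :=
  ∑ k ∈ Finset.range n, fcoef f k * walsh k x

/-- Fejér means `σ_n f = (1/n) ∑_{k=1}^n S_k f`. -/
noncomputable def fejerMean (f : G → ℝ) (n : ℕ) (x : G) : ℝ :=
  (1 / (n : ℝ)) * ∑ k ∈ Finset.range n, partialSum f (k + 1) x


/-- Extend the Walsh product to any sufficiently large range. -/
lemma walsh_eq_prod (m N : ℕ) (hm : m < 2 ^ N) (z : G) :
    walsh m z = ∏ j ∈ Finset.range N, rad j z ^ ((m.testBit j).toNat) := by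
  unfold walsh
  rcases le_total m N with h | h
  · rw [← Finset.prod_range_mul_prod_Ico _ h]
    have h1 : ∏ j ∈ Finset.Ico m N, rad j z ^ ((m.testBit j).toNat) = 1 := by
      apply Finset.prod_eq_one
      intro j hj
      have : m.testBit j = false := Nat.testBit_lt_two_pow
        (lt_of_le_of_lt (Finset.mem_Ico.mp hj).1 (Nat.lt_two_pow_self (n := j)))
      simp [this]
    rw [h1, mul_one]
  · rw [← Finset.prod_range_mul_prod_Ico _ h]
    have h1 : ∏ j ∈ Finset.Ico N m, rad j z ^ ((m.testBit j).toNat) = 1 := by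
      apply Finset.prod_eq_one
      intro j hj
      have : m.testBit j = false := Nat.testBit_lt_two_pow
        (lt_of_lt_of_le hm (Nat.pow_le_pow_right (by norm_num) (Finset.mem_Ico.mp hj).1))
      simp [this]
    rw [h1, mul_one]

lemma walsh_two_pow_add (n i : ℕ) (hi : i < 2 ^ n) (z : G) :
    walsh (2 ^ n + i) z = rad n z * walsh i z := by
  have h1 : 2 ^ n + i < 2 ^ (n + 1) := by
    rw [pow_succ, mul_two]; omega
  rw [walsh_eq_prod _ (n + 1) h1 z, walsh_eq_prod i n hi z, Finset.prod_range_succ]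
  have ht : (2 ^ n + i).testBit n = true := by
    rw [Nat.testBit_two_pow_add_eq, Nat.testBit_lt_two_pow hi]
    rfl
  rw [ht]
  have : ∀ j ∈ Finset.range n, rad j z ^ (((2 ^ n + i).testBit j).toNat) =
      rad j z ^ ((i.testBit j).toNat) := by
    intro j hj
    rw [Nat.testBit_two_pow_add_gt (Finset.mem_range.mp hj)]
  rw [Finset.prod_congr rfl this]
  simp [mul_comm]

lemma dirichlet_two_pow_add (n m : ℕ) (hm : m ≤ 2 ^ n) (z : G) :
    dirichlet (2 ^ n + m) z = dirichlet (2 ^ n) z + rad n z * dirichlet m z := by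
  unfold dirichlet
  rw [Finset.sum_range_add, Finset.mul_sum]
  congr 1
  apply Finset.sum_congr rfl
  intro i hi
  exact walsh_two_pow_add n i (lt_of_lt_of_le (Finset.mem_range.mp hi) hm) z

lemma dirichlet_two_pow_succ (n : ℕ) (z : G) :
    dirichlet (2 ^ (n + 1)) z = (1 + rad n z) * dirichlet (2 ^ n) z := by
  have : (2 : ℕ) ^ (n + 1) = 2 ^ n + 2 ^ n := by rw [pow_succ, mul_two]
  rw [this, dirichlet_two_pow_add n (2 ^ n) le_rfl z]
  ring

lemma fejer_sum_succ (n : ℕ) (z : G) :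
    ∑ j ∈ Finset.range (2 ^ (n + 1)), dirichlet (j + 1) z =
      (1 + rad n z) * (∑ j ∈ Finset.range (2 ^ n), dirichlet (j + 1) z)
        + (2 ^ n : ℝ) * dirichlet (2 ^ n) z := by
  have h2 : (2 : ℕ) ^ (n + 1) = 2 ^ n + 2 ^ n := by rw [pow_succ, mul_two]
  rw [h2, Finset.sum_range_add]
  have : ∀ i ∈ Finset.range (2 ^ n), dirichlet (2 ^ n + i + 1) z =
      dirichlet (2 ^ n) z + rad n z * dirichlet (i + 1) z := by
    intro i hi
    rw [add_assoc]
    exact dirichlet_two_pow_add n (i + 1) (Finset.mem_range.mp hi) z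
  rw [Finset.sum_congr rfl this, Finset.sum_add_distrib, ← Finset.mul_sum,
    Finset.sum_const, Finset.card_range, nsmul_eq_mul]
  push_cast
  ring

/-- for `k < l < α`, `t ∈ I_M` (`M ≥ l+1`) and `x ∈ I_{l+1}(e_k+e_l)`,
`K_{2^α}(x+t) = 0`. -/
theorem fejer_dyadic_vanishes (M k l α : ℕ) (h1 : k < l) (h2 : l < α) (h3 : l + 1 ≤ M)
    (t : G) (ht : t ∈ I M) (x : G) (hx : x ∈ cyl (l + 1) (e k + e l)) :
    fejer (2 ^ α) (x + t) = 0 := by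
  set z := x + t with hz
  have hzj : ∀ j, j ≤ l → z j = (e k + e l) j := by
    intro j hj
    have hxj := hx j (by omega)
    have htj : t j = 0 := ht j (by omega)
    show x j + t j = _
    rw [hxj, htj, add_zero]
  have hradk : rad k z = -1 := by
    have : z k = 1 := by
      rw [hzj k (le_of_lt h1)]
      simp [e, Pi.add_apply, ne_of_lt h1]
    norm_num [rad, this, ZMod.val_one]
  have hradl : rad l z = -1 := by
    have : z l = 1 := by
      rw [hzj l le_rfl]
      simp [e, Pi.add_apply, Ne.symm (ne_of_lt h1)]
    norm_num [rad, this, ZMod.val_one]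
  -- dirichlet (2^n) z = 0 for n > k
  have hD : ∀ n, k < n → dirichlet (2 ^ n) z = 0 := by
    intro n hn
    induction n with
    | zero => omega
    | succ m ih =>
      rcases Nat.lt_or_ge k m with h | h
      · rw [dirichlet_two_pow_succ, ih h, mul_zero]
      · have hm : m = k := by omega
        rw [hm, dirichlet_two_pow_succ, hradk]
        ring
  -- the Fejér numerator vanishes for n ≥ l+1
  have hS : ∀ n, l + 1 ≤ n → ∑ j ∈ Finset.range (2 ^ n), dirichlet (j + 1) z = 0 := by
    intro n hn
    induction n with
    | zero => omega
    | succ m ih =>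
      rcases Nat.lt_or_ge l m with h | h
      · rw [fejer_sum_succ, ih (by omega), hD m (by omega), mul_zero, mul_zero, add_zero]
      · have hm : m = l := by omega
        rw [hm, fejer_sum_succ, hradl, hD l h1]
        ring
  unfold fejer
  rw [hS α (by omega), mul_zero]
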